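/- If κ₋ > (n-2)κ₂ with κ₁, κ₂, κ₋₁, κ₋ > 0 and n ≥ 3, then ᾱ = n/(n-2) + (κ₋₁ + κ₁ - √((κ₁+κ₋₁)² + 4κ₁κ₂(n-1)))/(κ₋(n-1)) satisfies ᾱ > 1. -/

import Mathlib

theorem alpha_gt_one_of_km_large (n : ℕ) (hn : 3 ≤ n)
    (κ₁ κ₂ κm1 κm : ℝ) (h1 : 0 < κ₁) (h2 : 0 < κ₂) (hm1 : 0 < κm1) (hm : 0 < κm)
    (hbig : κm > ((n : ℝ) - 2) * κ₂)
    (αbar : ℝ)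
    (hα : αbar = (n : ℝ) / ((n : ℝ) - 2) +
      (κm1 + κ₁ - Real.sqrt ((κ₁ + κm1) ^ 2 + 4 * κ₁ * κ₂ * ((n : ℝ) - 1))) /
        (κm * ((n : ℝ) - 1))) :
    αbar > 1 := by
  have hN : (3:ℝ) ≤ (n:ℝ) := by exact_mod_cast hn
  have hn2 : (0:ℝ) < (n:ℝ) - 2 := by linarith
  have hn1 : (0:ℝ) < (n:ℝ) - 1 := by linarith
  set s := Real.sqrt ((κ₁ + κm1) ^ 2 + 4 * κ₁ * κ₂ * ((n : ℝ) - 1)) with hsdef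
  have hs_lt : s < (κ₁ + κm1) + 2 * κ₂ * ((n:ℝ) - 1) := by
    rw [hsdef, Real.sqrt_lt' (by positivity)]
    nlinarith [mul_pos (mul_pos hm1 h2) hn1, sq_nonneg (2 * κ₂ * ((n:ℝ) - 1))]
  have hκm : 0 < κm * ((n:ℝ) - 1) := by positivity
  have key : -(2 * κ₂ * ((n:ℝ) - 1)) / (κm * ((n:ℝ) - 1)) <
      (κm1 + κ₁ - s) / (κm * ((n:ℝ) - 1)) :=
    (div_lt_div_iff_of_pos_right hκm).mpr (by linarith)
  have heq : -(2 * κ₂ * ((n:ℝ) - 1)) / (κm * ((n:ℝ) - 1)) = -(2 * κ₂) / κm := by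
    field_simp
  have hfrac : -(2 * κ₂) / κm > -(2 / ((n:ℝ) - 2)) := by
    rw [gt_iff_lt, neg_div, neg_lt_neg_iff, div_lt_div_iff₀ hm hn2]
    nlinarith
  have hone : (n:ℝ) / ((n:ℝ) - 2) - 2 / ((n:ℝ) - 2) = 1 := by
    field_simp
  rw [heq] at key
  rw [hα]
  linarith
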